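/- arXiv:2504.20807 — 3 statements merged into one kernel-verified Lean document; each statement's English description precedes it below -/
import Mathlib

section
/- Assume in addition X ⊆ Y. Then: (i) for every y ∈ X, the function x ↦ c(x,y) − g ln x₃ on X attains its minimum uniquely at x = y, with minimum value g − g ln y₃; (ii) for every Borel probability measure σ on X, the optimal transport cost from σ to itself satisfies T_c(σ,σ) = g, and the identity coupling (the pushforward of σ under x ↦ (x,x)) is optimal. -/
open MeasureTheory Set Real Filter
open scoped ENNReal NNReal

noncomputable section

abbrev R3 : Type := EuclideanSpace ℝ (Fin 3)

def Ydom (δ : ℝ) : Set R3 := {y : R3 | y 2 ∈ Set.Ioo δ δ⁻¹}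

def Phi (fcor g : ℝ) (x : R3) : R3 :=
  WithLp.toLp 2 ![(fcor ^ 2)⁻¹ * x 0, (fcor ^ 2)⁻¹ * x 1,
    g⁻¹ * (x 2 - (1 / 2) * (fcor ^ 2)⁻¹ * ((x 0) ^ 2 + (x 1) ^ 2))]

def cost (fcor g : ℝ) (x y : R3) : ℝ :=
  (y 2)⁻¹ * (fcor ^ 2 / 2 * (x 0 - y 0) ^ 2 + fcor ^ 2 / 2 * (x 1 - y 1) ^ 2 + g * x 2)

def Tcost (fcor g : ℝ) (σ α : Measure R3) : ℝ :=
  sInf {r : ℝ | ∃ pl : Measure (R3 × R3), IsProbabilityMeasure pl ∧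
    pl.map Prod.fst = σ ∧ pl.map Prod.snd = α ∧ r = ∫ p, cost fcor g p.1 p.2 ∂pl}

open Classical in
def Fen (κ γ : ℝ) (X : Set R3) (σ : Measure R3) : EReal :=
  if σ ≪ (volume : Measure R3) then
    ((ENNReal.ofReal κ * (∫⁻ x in X, σ.rnDeriv volume x ^ γ) : ℝ≥0∞) : EReal)
  else ⊤

def Egeo (fcor g κ γ : ℝ) (X : Set R3) (σ α : Measure R3) : EReal :=
  ((Tcost fcor g σ α : ℝ) : EReal) + Fen κ γ X σ

def fstar (κ γ : ℝ) (t : ℝ) : ℝ :=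
  sSup ((fun s => s * t - κ * s ^ γ) '' Set.Ici (0:ℝ))

def wc (fcor g : ℝ) (N : ℕ) (w : Fin N → ℝ) (z : Fin N → R3) (x : R3) : ℝ :=
  ⨅ i, (cost fcor g x (z i) - w i)

def Gdual (fcor g κ γ : ℝ) (X : Set R3) (N : ℕ) (m : Fin N → ℝ)
    (w : Fin N → ℝ) (z : Fin N → R3) : ℝ :=
  ∑ i, m i * w i - ∫ x in X, fstar κ γ (-(wc fcor g N w z x))

def LagCell (fcor g : ℝ) (X : Set R3) (N : ℕ) (w : Fin N → ℝ) (z : Fin N → R3) (i : Fin N) :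
    Set R3 :=
  {x ∈ X | ∀ j, cost fcor g x (z i) - w i ≤ cost fcor g x (z j) - w j}

def simplexN (N : ℕ) : Set (Fin N → ℝ) := {m | (∀ i, m i ∈ Set.Ioo (0:ℝ) 1) ∧ ∑ i, m i = 1}

def DN (δ : ℝ) (N : ℕ) : Set (Fin N → R3) :=
  {z | (∀ i, z i ∈ Ydom δ) ∧ ∀ i j, i ≠ j → z i ≠ z j}

def D0N (δ : ℝ) (N : ℕ) : Set (Fin N → R3) :=
  {z | z ∈ DN δ N ∧ ∀ i j, i ≠ j → z i 2 ≠ z j 2}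

def Jmap (fcor : ℝ) (v : R3) : R3 := WithLp.toLp 2 ![-(fcor * v 1), fcor * v 0, 0]

def diracComb (N : ℕ) (m : Fin N → ℝ) (z : Fin N → R3) : Measure R3 :=
  ∑ i, ENNReal.ofReal (m i) • Measure.dirac (z i)

def Cmap (fcor g κ γ : ℝ) (X : Set R3) (N : ℕ) (m : Fin N → ℝ)
    (wstar : (Fin N → R3) → Fin N → ℝ) (z : Fin N → R3) (i : Fin N) : R3 :=
  (m i)⁻¹ • ∫ x in LagCell fcor g X N (wstar z) z i,
    deriv (fstar κ γ) (wstar z i - cost fcor g x (z i)) • x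

lemma cost_ge (fcor g : ℝ) (hg : 0 < g) {x y : R3} (hx : 0 < x 2) (hy : 0 < y 2) :
    g * (x 2 / y 2) ≤ cost fcor g x y := by
  have hyi : 0 < (y 2)⁻¹ := inv_pos.mpr hy
  have e : g * (x 2 / y 2) = (y 2)⁻¹ * (g * x 2) := by field_simp
  unfold cost
  rw [e]
  have hA : 0 ≤ fcor ^ 2 / 2 * (x 0 - y 0) ^ 2 := by positivity
  have hB : 0 ≤ fcor ^ 2 / 2 * (x 1 - y 1) ^ 2 := by positivity
  nlinarith [mul_nonneg hyi.le (add_nonneg hA hB)]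

lemma key_le (fcor g : ℝ) (hg : 0 < g) {x y : R3} (hx : 0 < x 2) (hy : 0 < y 2) :
    g + g * Real.log (x 2) - g * Real.log (y 2) ≤ cost fcor g x y := by
  have hlog : Real.log (x 2) - Real.log (y 2) ≤ x 2 / y 2 - 1 := by
    have := Real.log_le_sub_one_of_pos (div_pos hx hy)
    rwa [Real.log_div hx.ne' hy.ne'] at this
  have h2 := cost_ge fcor g hg hx hy
  nlinarith [mul_le_mul_of_nonneg_left hlog hg.le]

lemma key_lt (fcor g : ℝ) (hf : 0 < fcor) (hg : 0 < g) {x y : R3} (hx : 0 < x 2)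
    (hy : 0 < y 2) (hne : x ≠ y) :
    g + g * Real.log (x 2) - g * Real.log (y 2) < cost fcor g x y := by
  have hyi : 0 < (y 2)⁻¹ := inv_pos.mpr hy
  by_cases h2 : x 2 = y 2
  · have hxy : x 0 ≠ y 0 ∨ x 1 ≠ y 1 := by
      by_contra h
      push_neg at h
      exact hne (by ext i; fin_cases i <;> first | exact h.1 | exact h.2 | exact h2)
    have hAB : 0 < fcor ^ 2 / 2 * (x 0 - y 0) ^ 2 + fcor ^ 2 / 2 * (x 1 - y 1) ^ 2 := by
      rcases hxy with h | h
      · have h' : x 0 - y 0 ≠ 0 := sub_ne_zero.mpr h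
        have : 0 < (x 0 - y 0) ^ 2 := by positivity
        nlinarith [sq_nonneg (x 1 - y 1), sq_nonneg fcor, pow_pos hf 2]
      · have h' : x 1 - y 1 ≠ 0 := sub_ne_zero.mpr h
        have : 0 < (x 1 - y 1) ^ 2 := by positivity
        nlinarith [sq_nonneg (x 0 - y 0), pow_pos hf 2]
    unfold cost
    rw [h2]
    nlinarith [mul_pos hyi hAB, inv_mul_cancel₀ hy.ne', mul_inv_cancel₀ hy.ne']
  · have ht : x 2 / y 2 ≠ 1 := fun h => h2 ((div_eq_one_iff_eq hy.ne').mp h)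
    have hlog : Real.log (x 2) - Real.log (y 2) < x 2 / y 2 - 1 := by
      have := Real.log_lt_sub_one_of_pos (div_pos hx hy) ht
      rwa [Real.log_div hx.ne' hy.ne'] at this
    have h3 := cost_ge fcor g hg hx hy
    nlinarith [mul_lt_mul_of_pos_left hlog hg]

lemma cost_meas (fcor g : ℝ) : Measurable (fun p : R3 × R3 => cost fcor g p.1 p.2) := by
  have h0 : ∀ i : Fin 3, Measurable (fun p : R3 × R3 => p.1 i) := fun i =>
    ((EuclideanSpace.proj i : R3 →L[ℝ] ℝ).continuous.measurable).comp measurable_fst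
  have h1 : ∀ i : Fin 3, Measurable (fun p : R3 × R3 => p.2 i) := fun i =>
    ((EuclideanSpace.proj i : R3 →L[ℝ] ℝ).continuous.measurable).comp measurable_snd
  unfold cost
  exact ((h1 2).inv).mul
    (((measurable_const.mul (((h0 0).sub (h1 0)).pow_const 2)).add
      (measurable_const.mul (((h0 1).sub (h1 1)).pow_const 2))).add
      (measurable_const.mul (h0 2)))
theorem stmt16 (fcor g δ : ℝ) (hf : 0 < fcor) (hg : 0 < g) (hδ : δ ∈ Set.Ioo (0:ℝ) 1)
    (X : Set R3) (hXne : X.Nonempty) (hXconn : IsConnected X) (hXcpt : IsCompact X)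
    (hXcl : X = closure (interior X)) (hXconv : Convex ℝ (Phi fcor g ⁻¹' X))
    (hXY : X ⊆ Ydom δ) :
    (∀ y ∈ X,
      (cost fcor g y y - g * Real.log (y 2) = g - g * Real.log (y 2)) ∧
      (∀ x ∈ X, g - g * Real.log (y 2) ≤ cost fcor g x y - g * Real.log (x 2)) ∧
      (∀ x ∈ X, x ≠ y → g - g * Real.log (y 2) < cost fcor g x y - g * Real.log (x 2))) ∧
    (∀ σ : Measure R3, IsProbabilityMeasure σ → σ Xᶜ = 0 →
      Tcost fcor g σ σ = g ∧
      (Measure.map (fun x : R3 => (x, x)) σ).map Prod.fst = σ ∧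
      (Measure.map (fun x : R3 => (x, x)) σ).map Prod.snd = σ ∧
      (∫ p, cost fcor g p.1 p.2 ∂(Measure.map (fun x : R3 => (x, x)) σ))
        = Tcost fcor g σ σ) := by
  have hδ0 : 0 < δ := hδ.1
  have hposX : ∀ x ∈ X, 0 < x 2 := fun x hx => hδ0.trans (hXY hx).1
  have hcostyy : ∀ y ∈ X, cost fcor g y y = g := by
    intro y hy
    have h := (hposX y hy).ne'
    unfold cost
    field_simp
    ring
  constructor
  · intro y hy
    have hy0 := hposX y hy
    refine ⟨by rw [hcostyy y hy], fun x hx => ?_, fun x hx hne => ?_⟩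
    · have := key_le fcor g hg (hposX x hx) hy0
      linarith
    · have := key_lt fcor g hf hg (hposX x hx) hy0 hne
      linarith
  · intro σ hσ hσX
    have hXm : MeasurableSet X := hXcpt.isClosed.measurableSet
    have hdiag : Measurable (fun x : R3 => (x, x)) := measurable_id.prodMk measurable_id
    set π0 := Measure.map (fun x : R3 => (x, x)) σ with hπ0
    have hπ0prob : IsProbabilityMeasure π0 := Measure.isProbabilityMeasure_map hdiag.aemeasurable
    have hmfst : π0.map Prod.fst = σ := by
      rw [hπ0, Measure.map_map measurable_fst hdiag]
      simp [Function.comp_def]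
    have hmsnd : π0.map Prod.snd = σ := by
      rw [hπ0, Measure.map_map measurable_snd hdiag]
      simp [Function.comp_def]
    have haeX : ∀ᵐ x ∂σ, x ∈ X := by
      rw [ae_iff]
      exact hσX
    have hcostm := cost_meas fcor g
    have hval : ∫ p, cost fcor g p.1 p.2 ∂π0 = g := by
      rw [hπ0, integral_map hdiag.aemeasurable hcostm.aestronglyMeasurable]
      have hae : ∀ᵐ x ∂σ, cost fcor g x x = g := by
        filter_upwards [haeX] with x hx
        exact hcostyy x hx
      rw [integral_congr_ae hae]
      simp
    -- lower bound
    have hmlog : Measurable (fun x : R3 => Real.log (x 2)) :=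
      Real.measurable_log.comp (EuclideanSpace.proj (2 : Fin 3) : R3 →L[ℝ] ℝ).continuous.measurable
    have hLb : ∀ x ∈ X, |Real.log (x 2)| ≤ Real.log δ⁻¹ := by
      intro x hx
      have h := hXY hx
      rw [abs_le]
      constructor
      · rw [Real.log_inv]
        have : Real.log δ ≤ Real.log (x 2) := Real.log_le_log hδ0 h.1.le
        linarith
      · exact Real.log_le_log (hposX x hx) h.2.le
    obtain ⟨C, hC⟩ : ∃ C, ∀ p ∈ X ×ˢ X, ‖cost fcor g p.1 p.2‖ ≤ C := by
      apply (hXcpt.prod hXcpt).exists_bound_of_continuousOn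
      have c1 : ∀ i : Fin 3, Continuous (fun p : R3 × R3 => p.1 i) := fun i =>
        (EuclideanSpace.proj i : R3 →L[ℝ] ℝ).continuous.comp continuous_fst
      have c2 : ∀ i : Fin 3, Continuous (fun p : R3 × R3 => p.2 i) := fun i =>
        (EuclideanSpace.proj i : R3 →L[ℝ] ℝ).continuous.comp continuous_snd
      unfold cost
      apply ContinuousOn.mul
      · exact ContinuousOn.inv₀ (c2 2).continuousOn
          (fun p hp => (hposX p.2 hp.2).ne')
      · exact (((continuous_const.mul (((c1 0).sub (c2 0)).pow 2)).add
          (continuous_const.mul (((c1 1).sub (c2 1)).pow 2))).add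
          (continuous_const.mul (c1 2))).continuousOn
    have hlow : ∀ r ∈ {r : ℝ | ∃ pl : Measure (R3 × R3), IsProbabilityMeasure pl ∧
        pl.map Prod.fst = σ ∧ pl.map Prod.snd = σ ∧
        r = ∫ p, cost fcor g p.1 p.2 ∂pl}, g ≤ r := by
      rintro r ⟨pl, hplprob, hfst, hsnd, rfl⟩
      have h1 : ∀ᵐ p ∂pl, p.1 ∈ X := by
        rw [ae_iff]
        have e : {p : R3 × R3 | ¬ p.1 ∈ X} = Prod.fst ⁻¹' Xᶜ := rfl
        rw [e, ← Measure.map_apply measurable_fst hXm.compl, hfst]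
        exact hσX
      have h2 : ∀ᵐ p ∂pl, p.2 ∈ X := by
        rw [ae_iff]
        have e : {p : R3 × R3 | ¬ p.2 ∈ X} = Prod.snd ⁻¹' Xᶜ := rfl
        rw [e, ← Measure.map_apply measurable_snd hXm.compl, hsnd]
        exact hσX
      have hintc : Integrable (fun p : R3 × R3 => cost fcor g p.1 p.2) pl := by
        apply Integrable.mono' (integrable_const C) hcostm.aestronglyMeasurable
        filter_upwards [h1, h2] with p hp1 hp2
        exact hC p ⟨hp1, hp2⟩
      have hm1 : Measurable (fun p : R3 × R3 => Real.log (p.1 2)) :=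
        hmlog.comp measurable_fst
      have hm2 : Measurable (fun p : R3 × R3 => Real.log (p.2 2)) :=
        hmlog.comp measurable_snd
      have hint1 : Integrable (fun p : R3 × R3 => Real.log (p.1 2)) pl := by
        apply Integrable.mono' (integrable_const (Real.log δ⁻¹)) hm1.aestronglyMeasurable
        filter_upwards [h1] with p hp1
        exact hLb p.1 hp1
      have hint2 : Integrable (fun p : R3 × R3 => Real.log (p.2 2)) pl := by
        apply Integrable.mono' (integrable_const (Real.log δ⁻¹)) hm2.aestronglyMeasurable
        filter_upwards [h2] with p hp2
        exact hLb p.2 hp2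
      have hinth : Integrable
          (fun p : R3 × R3 => g + g * Real.log (p.1 2) - g * Real.log (p.2 2)) pl :=
        ((integrable_const g).add (hint1.const_mul g)).sub (hint2.const_mul g)
      have hmono : ∫ p, (g + g * Real.log (p.1 2) - g * Real.log (p.2 2)) ∂pl
          ≤ ∫ p, cost fcor g p.1 p.2 ∂pl := by
        apply integral_mono_ae hinth hintc
        filter_upwards [h1, h2] with p hp1 hp2
        exact key_le fcor g hg (hposX p.1 hp1) (hposX p.2 hp2)
      have e1 : ∫ p : R3 × R3, Real.log (p.1 2) ∂pl = ∫ x, Real.log (x 2) ∂σ := by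
        rw [← hfst, integral_map measurable_fst.aemeasurable]
        rw [hfst]
        exact hmlog.aestronglyMeasurable
      have e2 : ∫ p : R3 × R3, Real.log (p.2 2) ∂pl = ∫ x, Real.log (x 2) ∂σ := by
        rw [← hsnd, integral_map measurable_snd.aemeasurable]
        rw [hsnd]
        exact hmlog.aestronglyMeasurable
      have hsplit : ∫ p, (g + g * Real.log (p.1 2) - g * Real.log (p.2 2)) ∂pl = g := by
        calc ∫ p, (g + g * Real.log (p.1 2) - g * Real.log (p.2 2)) ∂pl
            = (∫ p, (g + g * Real.log (p.1 2)) ∂pl) - ∫ p, g * Real.log (p.2 2) ∂pl :=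
              integral_sub ((integrable_const g).add (hint1.const_mul g)) (hint2.const_mul g)
          _ = ((∫ _p : R3 × R3, g ∂pl) + ∫ p, g * Real.log (p.1 2) ∂pl)
              - ∫ p, g * Real.log (p.2 2) ∂pl := by
              exact congrArg (· - ∫ p, g * Real.log (p.2 2) ∂pl)
                (integral_add (integrable_const g) (hint1.const_mul g))
          _ = g := by
              rw [integral_const, integral_const_mul, integral_const_mul, e1, e2]
              simp
      linarith
    have hmem : g ∈ {r : ℝ | ∃ pl : Measure (R3 × R3), IsProbabilityMeasure pl ∧
        pl.map Prod.fst = σ ∧ pl.map Prod.snd = σ ∧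
        r = ∫ p, cost fcor g p.1 p.2 ∂pl} := ⟨π0, hπ0prob, hmfst, hmsnd, hval.symm⟩
    have hT : Tcost fcor g σ σ = g := by
      unfold Tcost
      exact le_antisymm (csInf_le ⟨g, hlow⟩ hmem) (le_csInf ⟨g, hmem⟩ hlow)
    exact ⟨hT, hmfst, hmsnd, by rw [hval, hT]⟩
end
end

section
/- Take γ = 2 and κ = 1/2, so that f*(t) = t²/2 for t > 0 and f*(t) = 0 for t ≤ 0. Let X = [−a,a] × [−b,b] × [0,h] with a,b,h > 0 and |X| = 4abh, let N = 1 with single mass m¹ = 1, and let z ∈ Y satisfy c(x,z) − (1/|X|)∫_X c(x̃,z) dx̃ < 1/|X| for all x ∈ X. Set w = (1/|X|)(1 + ∫_X c(x,z) dx). Then: (i) w is the unique maximiser over ℝ of the dual functional w̃ ↦ G(w̃,z) = w̃ − ∫_X f*(w̃ − c(x,z)) dx; (ii) the unique minimiser of E(·,δ_z) over Borel probability measures on X is the absolutely continuous measure with density x ↦ w − c(x,z); (iii) the first two components of the centroid C(z) = ∫_X x (w − c(x,z)) dx satisfy C₁(z) = (1 − B) z₁ and C₂(z) = (1 − A) z₂,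 where A = 1 − |X| f_cor² b² / (3 z₃) and B = 1 − |X| f_cor² a² / (3 z₃). -/
open MeasureTheory Set Real Filter
open scoped ENNReal NNReal

noncomputable section

open MeasureTheory Set Real Filter
open scoped ENNReal NNReal

lemma contApp (i : Fin 3) : Continuous fun x : R3 => x i := (EuclideanSpace.proj i).continuous

lemma cost_cont (fcor g : ℝ) (z : R3) : Continuous fun x : R3 => cost fcor g x z := by
  unfold cost
  exact continuous_const.mul ((((continuous_const.mul (((contApp 0).sub continuous_const).pow 2)).add
    (continuous_const.mul (((contApp 1).sub continuous_const).pow 2))).add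
    (continuous_const.mul (contApp 2))))

def S3 (a b h : ℝ) : Fin 3 → Set ℝ := ![Icc (-a) a, Icc (-b) b, Icc 0 h]

lemma S3_meas (a b h : ℝ) (i : Fin 3) : MeasurableSet (S3 a b h i) := by
  fin_cases i <;> simp [S3] <;> exact measurableSet_Icc

lemma Xbox_eq (a b h : ℝ) :
    {x : R3 | x 0 ∈ Set.Icc (-a) a ∧ x 1 ∈ Set.Icc (-b) b ∧ x 2 ∈ Set.Icc (0:ℝ) h}
    = (MeasurableEquiv.toLp 2 (Fin 3 → ℝ)).symm ⁻¹' (Set.univ.pi (S3 a b h)) := by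
  ext x
  simp only [Set.mem_preimage, Set.mem_pi, Set.mem_univ, forall_true_left, Set.mem_setOf_eq]
  constructor
  · rintro ⟨h0, h1, h2⟩ i
    fin_cases i <;> simpa [S3, MeasurableEquiv.coe_toLp_symm]
  · intro hi
    refine ⟨?_, ?_, ?_⟩
    · simpa [S3, MeasurableEquiv.coe_toLp_symm] using hi 0
    · simpa [S3, MeasurableEquiv.coe_toLp_symm] using hi 1
    · simpa [S3, MeasurableEquiv.coe_toLp_symm] using hi 2

lemma box_integral (a b h : ℝ) (f : Fin 3 → ℝ → ℝ) :
    (∫ x in (MeasurableEquiv.toLp 2 (Fin 3 → ℝ)).symm ⁻¹' (Set.univ.pi (S3 a b h)),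
      f 0 (x 0) * f 1 (x 1) * f 2 (x 2)) =
    (∫ t in Icc (-a) a, f 0 t) * (∫ t in Icc (-b) b, f 1 t) * (∫ t in Icc 0 h, f 2 t) := by
  have hemb := (MeasurableEquiv.toLp 2 (Fin 3 → ℝ)).symm.measurableEmbedding
  have hmp := EuclideanSpace.volume_preserving_symm_measurableEquiv_toLp (Fin 3)
  have key := hmp.setIntegral_preimage_emb hemb
    (fun y : Fin 3 → ℝ => f 0 (y 0) * f 1 (y 1) * f 2 (y 2)) (Set.univ.pi (S3 a b h))
  rw [show (∫ x in (MeasurableEquiv.toLp 2 (Fin 3 → ℝ)).symm ⁻¹' (Set.univ.pi (S3 a b h)),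
      f 0 (x 0) * f 1 (x 1) * f 2 (x 2)) =
      ∫ x in (MeasurableEquiv.toLp 2 (Fin 3 → ℝ)).symm ⁻¹' (Set.univ.pi (S3 a b h)),
      (fun y : Fin 3 → ℝ => f 0 (y 0) * f 1 (y 1) * f 2 (y 2))
        ((MeasurableEquiv.toLp 2 (Fin 3 → ℝ)).symm x) from rfl, key]
  have hms : MeasurableSet (Set.univ.pi (S3 a b h)) :=
    MeasurableSet.univ_pi (S3_meas a b h)
  rw [← integral_indicator hms]
  have hind : ∀ y : Fin 3 → ℝ,
      (Set.univ.pi (S3 a b h)).indicator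
        (fun y : Fin 3 → ℝ => f 0 (y 0) * f 1 (y 1) * f 2 (y 2)) y
      = ∏ i, (S3 a b h i).indicator (f i) (y i) := by
    intro y
    by_cases hy : y ∈ Set.univ.pi (S3 a b h)
    · rw [Set.indicator_of_mem hy, Fin.prod_univ_three]
      rw [Set.indicator_of_mem (hy 0 trivial), Set.indicator_of_mem (hy 1 trivial),
        Set.indicator_of_mem (hy 2 trivial)]
    · rw [Set.indicator_of_notMem hy]
      rw [Set.mem_pi] at hy
      push_neg at hy
      obtain ⟨i, -, hi⟩ := hy
      exact (Finset.prod_eq_zero (Finset.mem_univ i)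
        (Set.indicator_of_notMem hi _)).symm
  rw [show (fun y : Fin 3 → ℝ => f 0 (y 0) * f 1 (y 1) * f 2 (y 2)) =
    fun y => f 0 (y 0) * f 1 (y 1) * f 2 (y 2) from rfl]
  calc (∫ y : Fin 3 → ℝ, (Set.univ.pi (S3 a b h)).indicator
        (fun y : Fin 3 → ℝ => f 0 (y 0) * f 1 (y 1) * f 2 (y 2)) y)
      = ∫ y : Fin 3 → ℝ, ∏ i, (S3 a b h i).indicator (f i) (y i) :=
        integral_congr_ae (Filter.Eventually.of_forall hind)
    _ = ∏ i, ∫ t : ℝ, (S3 a b h i).indicator (f i) t :=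
        integral_fintype_prod_eq_prod (ι := Fin 3) (fun i => (S3 a b h i).indicator (f i))
    _ = (∫ t in Icc (-a) a, f 0 t) * (∫ t in Icc (-b) b, f 1 t) * (∫ t in Icc 0 h, f 2 t) := by
        rw [Fin.prod_univ_three]
        rw [integral_indicator (S3_meas a b h 0), integral_indicator (S3_meas a b h 1),
          integral_indicator (S3_meas a b h 2)]
        rfl

lemma int_Icc_one (l u : ℝ) (hlu : l ≤ u) : ∫ _t in Icc l u, (1:ℝ) = u - l := by
  rw [setIntegral_const, Real.volume_real_Icc_of_le hlu, smul_eq_mul, mul_one]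

lemma int_Icc_id (a : ℝ) : ∫ t in Icc (-a) a, t = 0 := by
  rcases le_or_gt (-a) a with hle | hlt
  · rw [integral_Icc_eq_integral_Ioc, ← intervalIntegral.integral_of_le hle,
      integral_id]
    ring
  · rw [Set.Icc_eq_empty (by linarith), Measure.restrict_empty, integral_zero_measure]

lemma int_Icc_sq_mul (a z0 : ℝ) (ha : 0 < a) :
    ∫ t in Icc (-a) a, (t - z0)^2 * t = -(4/3) * a^3 * z0 := by
  have hle : (-a) ≤ a := by linarith
  rw [integral_Icc_eq_integral_Ioc, ← intervalIntegral.integral_of_le hle]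
  have : ∀ t : ℝ, (t - z0)^2 * t = t^3 - 2*z0*t^2 + z0^2*t := fun t => by ring
  rw [intervalIntegral.integral_congr (g := fun t => t^3 - 2*z0*t^2 + z0^2*t)
    (fun t _ => this t)]
  have h1 : IntervalIntegrable (fun t : ℝ => t^3) volume (-a) a :=
    (continuous_pow 3).intervalIntegrable _ _
  have h2 : IntervalIntegrable (fun t : ℝ => 2*z0*t^2) volume (-a) a :=
    (continuous_const.mul (continuous_pow 2)).intervalIntegrable _ _
  have h3 : IntervalIntegrable (fun t : ℝ => z0^2*t) volume (-a) a :=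
    (continuous_const.mul continuous_id).intervalIntegrable _ _
  rw [intervalIntegral.integral_add (h1.sub h2) h3, intervalIntegral.integral_sub h1 h2,
    intervalIntegral.integral_const_mul, intervalIntegral.integral_const_mul,
    integral_pow, integral_pow, integral_id]
  ring

def P3 (a b h : ℝ) : Set R3 :=
  (MeasurableEquiv.toLp 2 (Fin 3 → ℝ)).symm ⁻¹' (Set.univ.pi (S3 a b h))

lemma P3_meas (a b h : ℝ) : MeasurableSet (P3 a b h) :=
  (MeasurableEquiv.toLp 2 (Fin 3 → ℝ)).symm.measurable
    (MeasurableSet.univ_pi (S3_meas a b h))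

lemma P3_compact (a b h : ℝ) : IsCompact (P3 a b h) := by
  have hB : IsCompact (Set.univ.pi (S3 a b h)) := by
    apply isCompact_univ_pi
    intro i
    fin_cases i <;> first | exact isCompact_Icc | simp [S3] <;> exact isCompact_Icc
  have : P3 a b h =
      (PiLp.continuousLinearEquiv 2 ℝ (fun _ : Fin 3 => ℝ)).toHomeomorph ⁻¹'
        (Set.univ.pi (S3 a b h)) := rfl
  rw [this]
  exact (PiLp.continuousLinearEquiv 2 ℝ (fun _ : Fin 3 => ℝ)).toHomeomorph.isCompact_preimage.2 hB

lemma P3_int_one (a b h : ℝ) (ha : 0 < a) (hb : 0 < b) (hh : 0 < h) :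
    ∫ _x in P3 a b h, (1:ℝ) = 4*a*b*h := by
  have := box_integral a b h (fun _ _ => 1)
  simp only [mul_one] at this
  rw [show (∫ _x in P3 a b h, (1:ℝ)) =
    ∫ x in (MeasurableEquiv.toLp 2 (Fin 3 → ℝ)).symm ⁻¹' (Set.univ.pi (S3 a b h)), (1:ℝ) from rfl,
    this, int_Icc_one _ _ (by linarith), int_Icc_one _ _ (by linarith),
    int_Icc_one _ _ (by linarith)]
  ring

lemma P3_volume (a b h : ℝ) (ha : 0 < a) (hb : 0 < b) (hh : 0 < h) :
    (volume (P3 a b h)).toReal = 4*a*b*h := by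
  have h1 := P3_int_one a b h ha hb hh
  rw [setIntegral_const, smul_eq_mul, mul_one] at h1
  exact h1

lemma P3_volume_ne_zero (a b h : ℝ) (ha : 0 < a) (hb : 0 < b) (hh : 0 < h) :
    volume (P3 a b h) ≠ 0 := by
  intro hc
  have := P3_volume a b h ha hb hh
  rw [hc] at this
  simp at this
  rcases this with (h1|h1)|h1 <;> linarith

lemma P3_volume_ne_top (a b h : ℝ) : volume (P3 a b h) ≠ ⊤ :=
  (P3_compact a b h).measure_ne_top

lemma box_integral3 (a b h : ℝ) (f₀ f₁ f₂ : ℝ → ℝ) :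
    (∫ x in P3 a b h, f₀ (x 0) * f₁ (x 1) * f₂ (x 2)) =
    (∫ t in Icc (-a) a, f₀ t) * (∫ t in Icc (-b) b, f₁ t) * (∫ t in Icc 0 h, f₂ t) :=
  box_integral a b h ![f₀, f₁, f₂]

lemma P3_centroid0 (fcor g a b h w : ℝ) (z : R3) (ha : 0 < a) (hb : 0 < b) (hh : 0 < h) :
    ∫ x in P3 a b h, (w - cost fcor g x z) * x 0
    = (z 2)⁻¹ * fcor^2 * (4*a^3*b*h/3) * z 0 := by
  have hkomp := P3_compact a b h
  have i1 : IntegrableOn (fun x : R3 => w * x 0) (P3 a b h) volume :=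
    (Continuous.continuousOn (by fun_prop)).integrableOn_compact hkomp
  have i2 : IntegrableOn (fun x : R3 => (z 2)⁻¹ * (fcor^2/2) * ((x 0 - z 0)^2 * x 0))
      (P3 a b h) volume :=
    (Continuous.continuousOn (by fun_prop)).integrableOn_compact hkomp
  have i3 : IntegrableOn (fun x : R3 => (z 2)⁻¹ * (fcor^2/2) * ((x 1 - z 1)^2 * x 0))
      (P3 a b h) volume :=
    (Continuous.continuousOn (by fun_prop)).integrableOn_compact hkomp
  have i4 : IntegrableOn (fun x : R3 => (z 2)⁻¹ * g * (x 2 * x 0)) (P3 a b h) volume :=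
    (Continuous.continuousOn (by fun_prop)).integrableOn_compact hkomp
  have key : ∀ x : R3, (w - cost fcor g x z) * x 0 =
      w * x 0 - (z 2)⁻¹ * (fcor^2/2) * ((x 0 - z 0)^2 * x 0)
        - (z 2)⁻¹ * (fcor^2/2) * ((x 1 - z 1)^2 * x 0) - (z 2)⁻¹ * g * (x 2 * x 0) := by
    intro x; simp only [cost]; ring
  rw [integral_congr_ae (Filter.Eventually.of_forall key)]
  have e1 : (∫ x in P3 a b h,
      (w * x 0 - (z 2)⁻¹ * (fcor^2/2) * ((x 0 - z 0)^2 * x 0)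
        - (z 2)⁻¹ * (fcor^2/2) * ((x 1 - z 1)^2 * x 0) - (z 2)⁻¹ * g * (x 2 * x 0)))
      = (∫ x in P3 a b h, (w * x 0 - (z 2)⁻¹ * (fcor^2/2) * ((x 0 - z 0)^2 * x 0)
        - (z 2)⁻¹ * (fcor^2/2) * ((x 1 - z 1)^2 * x 0)))
        - ∫ x in P3 a b h, (z 2)⁻¹ * g * (x 2 * x 0) :=
    integral_sub (by exact (i1.sub i2).sub i3) i4
  have e2 : (∫ x in P3 a b h, (w * x 0 - (z 2)⁻¹ * (fcor^2/2) * ((x 0 - z 0)^2 * x 0)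
        - (z 2)⁻¹ * (fcor^2/2) * ((x 1 - z 1)^2 * x 0)))
      = (∫ x in P3 a b h, (w * x 0 - (z 2)⁻¹ * (fcor^2/2) * ((x 0 - z 0)^2 * x 0)))
        - ∫ x in P3 a b h, (z 2)⁻¹ * (fcor^2/2) * ((x 1 - z 1)^2 * x 0) :=
    integral_sub (by exact i1.sub i2) i3
  have e3 : (∫ x in P3 a b h, (w * x 0 - (z 2)⁻¹ * (fcor^2/2) * ((x 0 - z 0)^2 * x 0)))
      = (∫ x in P3 a b h, w * x 0)
        - ∫ x in P3 a b h, (z 2)⁻¹ * (fcor^2/2) * ((x 0 - z 0)^2 * x 0) :=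
    integral_sub i1 i2
  rw [e1, e2, e3, integral_const_mul _ _, integral_const_mul _ _, integral_const_mul _ _, integral_const_mul _ _]
  have hx0 : ∫ x in P3 a b h, x 0 = 0 := by
    have := box_integral3 a b h (fun t => t) (fun _ => 1) (fun _ => 1)
    simp only [mul_one] at this
    rw [this, int_Icc_id]
    ring
  have hT1 : ∫ x in P3 a b h, (x 0 - z 0)^2 * x 0 = (-(4/3)*a^3*(z 0))*(2*b)*h := by
    have := box_integral3 a b h (fun t => (t - z 0)^2 * t) (fun _ => 1) (fun _ => 1)
    simp only [mul_one] at this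
    rw [this, int_Icc_sq_mul a (z 0) ha, int_Icc_one _ _ (by linarith),
      int_Icc_one _ _ (by linarith)]
    ring
  have hT2 : ∫ x in P3 a b h, (x 1 - z 1)^2 * x 0 = 0 := by
    have h2 := box_integral3 a b h (fun t => t) (fun t => (t - z 1)^2) (fun _ => 1)
    simp only [mul_one] at h2
    rw [show (fun x : R3 => (x 1 - z 1)^2 * x 0) = fun x : R3 => x 0 * (x 1 - z 1)^2 from
      funext fun x => by ring] at *
    rw [h2, int_Icc_id]
    ring
  have hT3 : ∫ x in P3 a b h, x 2 * x 0 = 0 := by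
    have h2 := box_integral3 a b h (fun t => t) (fun _ => 1) (fun t => t)
    simp only [mul_one, one_mul] at h2
    rw [show (fun x : R3 => x 2 * x 0) = fun x : R3 => x 0 * x 2 from
      funext fun x => by ring] at *
    rw [h2, int_Icc_id]
    ring
  rw [hx0, hT1, hT2, hT3]
  ring

lemma P3_centroid1 (fcor g a b h w : ℝ) (z : R3) (ha : 0 < a) (hb : 0 < b) (hh : 0 < h) :
    ∫ x in P3 a b h, (w - cost fcor g x z) * x 1
    = (z 2)⁻¹ * fcor^2 * (4*a*b^3*h/3) * z 1 := by
  have hkomp := P3_compact a b h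
  have i1 : IntegrableOn (fun x : R3 => w * x 1) (P3 a b h) volume :=
    (Continuous.continuousOn (by fun_prop)).integrableOn_compact hkomp
  have i2 : IntegrableOn (fun x : R3 => (z 2)⁻¹ * (fcor^2/2) * ((x 0 - z 0)^2 * x 1))
      (P3 a b h) volume :=
    (Continuous.continuousOn (by fun_prop)).integrableOn_compact hkomp
  have i3 : IntegrableOn (fun x : R3 => (z 2)⁻¹ * (fcor^2/2) * ((x 1 - z 1)^2 * x 1))
      (P3 a b h) volume :=
    (Continuous.continuousOn (by fun_prop)).integrableOn_compact hkomp
  have i4 : IntegrableOn (fun x : R3 => (z 2)⁻¹ * g * (x 2 * x 1)) (P3 a b h) volume :=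
    (Continuous.continuousOn (by fun_prop)).integrableOn_compact hkomp
  have key : ∀ x : R3, (w - cost fcor g x z) * x 1 =
      w * x 1 - (z 2)⁻¹ * (fcor^2/2) * ((x 0 - z 0)^2 * x 1)
        - (z 2)⁻¹ * (fcor^2/2) * ((x 1 - z 1)^2 * x 1) - (z 2)⁻¹ * g * (x 2 * x 1) := by
    intro x; simp only [cost]; ring
  rw [integral_congr_ae (Filter.Eventually.of_forall key)]
  have e1 : (∫ x in P3 a b h,
      (w * x 1 - (z 2)⁻¹ * (fcor^2/2) * ((x 0 - z 0)^2 * x 1)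
        - (z 2)⁻¹ * (fcor^2/2) * ((x 1 - z 1)^2 * x 1) - (z 2)⁻¹ * g * (x 2 * x 1)))
      = (∫ x in P3 a b h, (w * x 1 - (z 2)⁻¹ * (fcor^2/2) * ((x 0 - z 0)^2 * x 1)
        - (z 2)⁻¹ * (fcor^2/2) * ((x 1 - z 1)^2 * x 1)))
        - ∫ x in P3 a b h, (z 2)⁻¹ * g * (x 2 * x 1) :=
    integral_sub (by exact (i1.sub i2).sub i3) i4
  have e2 : (∫ x in P3 a b h, (w * x 1 - (z 2)⁻¹ * (fcor^2/2) * ((x 0 - z 0)^2 * x 1)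
        - (z 2)⁻¹ * (fcor^2/2) * ((x 1 - z 1)^2 * x 1)))
      = (∫ x in P3 a b h, (w * x 1 - (z 2)⁻¹ * (fcor^2/2) * ((x 0 - z 0)^2 * x 1)))
        - ∫ x in P3 a b h, (z 2)⁻¹ * (fcor^2/2) * ((x 1 - z 1)^2 * x 1) :=
    integral_sub (by exact i1.sub i2) i3
  have e3 : (∫ x in P3 a b h, (w * x 1 - (z 2)⁻¹ * (fcor^2/2) * ((x 0 - z 0)^2 * x 1)))
      = (∫ x in P3 a b h, w * x 1)
        - ∫ x in P3 a b h, (z 2)⁻¹ * (fcor^2/2) * ((x 0 - z 0)^2 * x 1) :=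
    integral_sub i1 i2
  rw [e1, e2, e3, integral_const_mul _ _, integral_const_mul _ _, integral_const_mul _ _, integral_const_mul _ _]
  have hx1 : ∫ x in P3 a b h, x 1 = 0 := by
    have h2 := box_integral3 a b h (fun _ => 1) (fun t => t) (fun _ => 1)
    simp only [mul_one, one_mul] at h2
    rw [h2, int_Icc_id]
    ring
  have hT1 : ∫ x in P3 a b h, (x 0 - z 0)^2 * x 1 = 0 := by
    have h2 := box_integral3 a b h (fun t => (t - z 0)^2) (fun t => t) (fun _ => 1)
    simp only [mul_one] at h2
    rw [h2, int_Icc_id]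
    ring
  have hT2 : ∫ x in P3 a b h, (x 1 - z 1)^2 * x 1 = (2*a) * (-(4/3)*b^3*(z 1)) * h := by
    have h2 := box_integral3 a b h (fun _ => 1) (fun t => (t - z 1)^2 * t) (fun _ => 1)
    simp only [mul_one, one_mul] at h2
    rw [h2, int_Icc_sq_mul b (z 1) hb, int_Icc_one _ _ (by linarith),
      int_Icc_one _ _ (by linarith)]
    ring
  have hT3 : ∫ x in P3 a b h, x 2 * x 1 = 0 := by
    have h2 := box_integral3 a b h (fun _ => 1) (fun t => t) (fun t => t)
    simp only [mul_one, one_mul] at h2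
    rw [show (fun x : R3 => x 2 * x 1) = fun x : R3 => x 1 * x 2 from
      funext fun x => by ring] at *
    rw [h2, int_Icc_id]
    ring
  rw [hx1, hT1, hT2, hT3]
  ring

lemma rpow_two' (s : ℝ) : s ^ (2:ℝ) = s ^ 2 := by
  rw [show (2:ℝ) = ((2:ℕ):ℝ) by norm_num, Real.rpow_natCast]

lemma fstar_eq (t : ℝ) : fstar (1/2) 2 t = (max t 0)^2 / 2 := by
  unfold fstar
  apply IsGreatest.csSup_eq
  constructor
  · refine ⟨max t 0, le_max_right t 0, ?_⟩
    simp only [rpow_two']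
    rcases le_total t 0 with ht | ht
    · rw [max_eq_right ht]; ring
    · rw [max_eq_left ht]; ring
  · rintro y ⟨s, hs0, rfl⟩
    simp only [Set.mem_Ici] at hs0
    simp only [rpow_two']
    have h1 := le_max_left t 0
    have h2 := le_max_right t 0
    nlinarith [sq_nonneg (s - max t 0), mul_nonneg hs0 (sub_nonneg.2 h1)]

lemma q_lb (u v : ℝ) (hu : 0 ≤ u) : u * v - u^2/2 ≤ (max v 0)^2/2 := by
  rcases le_total v 0 with hv | hv
  · rw [max_eq_right hv]; nlinarith
  · rw [max_eq_left hv]; nlinarith [sq_nonneg (v - u)]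

lemma q_strict (u v : ℝ) (hu : 0 < u) (hne : v ≠ u) : u * v - u^2/2 < (max v 0)^2/2 := by
  rcases le_or_gt 0 v with hv | hv
  · rw [max_eq_left hv]
    have h3 : v - u ≠ 0 := sub_ne_zero.mpr hne
    have : (0:ℝ) < (v - u)^2 := lt_of_le_of_ne (sq_nonneg _) (Ne.symm (pow_ne_zero 2 h3))
    nlinarith
  · rw [max_eq_right hv.le]
    nlinarith

lemma Gstrict (fcor g a b h w : ℝ) (z : R3)
    (ha : 0 < a) (hb : 0 < b) (hh : 0 < h)
    (hrpos : ∀ x ∈ P3 a b h, 0 < w - cost fcor g x z)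
    (hnorm : ∫ x in P3 a b h, (w - cost fcor g x z) = 1)
    (w' : ℝ) (hne : w' ≠ w) :
    w' - (∫ x in P3 a b h, (max (w' - cost fcor g x z) 0)^2/2)
      < w - ∫ x in P3 a b h, (max (w - cost fcor g x z) 0)^2/2 := by
  have hkomp := P3_compact a b h
  have hcc := cost_cont fcor g z
  have cq' : Continuous fun x : R3 => (max (w' - cost fcor g x z) 0)^2/2 :=
    (((continuous_const.sub hcc).max continuous_const).pow 2).div_const 2
  have cq : Continuous fun x : R3 => (max (w - cost fcor g x z) 0)^2/2 :=
    (((continuous_const.sub hcc).max continuous_const).pow 2).div_const 2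
  have crr : Continuous fun x : R3 => (w - cost fcor g x z) * (w' - w) :=
    (continuous_const.sub hcc).mul continuous_const
  have iq' : IntegrableOn (fun x : R3 => (max (w' - cost fcor g x z) 0)^2/2) (P3 a b h) volume :=
    cq'.continuousOn.integrableOn_compact hkomp
  have iq : IntegrableOn (fun x : R3 => (max (w - cost fcor g x z) 0)^2/2) (P3 a b h) volume :=
    cq.continuousOn.integrableOn_compact hkomp
  have irr : IntegrableOn (fun x : R3 => (w - cost fcor g x z) * (w' - w)) (P3 a b h) volume :=
    crr.continuousOn.integrableOn_compact hkomp
  set d : R3 → ℝ := fun x => (max (w' - cost fcor g x z) 0)^2/2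
    - (max (w - cost fcor g x z) 0)^2/2 - (w - cost fcor g x z) * (w' - w) with hd
  have hd_pos : ∀ x ∈ P3 a b h, 0 < d x := by
    intro x hx
    have hu := hrpos x hx
    have hq := q_strict (w - cost fcor g x z) (w' - cost fcor g x z) hu
      (by intro hc; exact hne (by linarith))
    rw [hd]
    simp only
    rw [max_eq_left hu.le]
    nlinarith
  have hd_int : IntegrableOn d (P3 a b h) volume :=
    ((cq'.sub cq).sub crr).continuousOn.integrableOn_compact hkomp
  have hd_nonneg : 0 ≤ᶠ[ae (volume.restrict (P3 a b h))] d := by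
    rw [Filter.EventuallyLE, ae_restrict_iff' (P3_meas a b h)]
    exact Filter.Eventually.of_forall fun x hx => (hd_pos x hx).le
  have hpos : 0 < ∫ x in P3 a b h, d x := by
    rw [setIntegral_pos_iff_support_of_nonneg_ae hd_nonneg hd_int]
    have hsub : P3 a b h ⊆ Function.support d ∩ P3 a b h :=
      fun x hx => ⟨(hd_pos x hx).ne', hx⟩
    exact lt_of_lt_of_le (pos_iff_ne_zero.mpr (P3_volume_ne_zero a b h ha hb hh))
      (measure_mono hsub)
  have e1 : (∫ x in P3 a b h, d x)
      = (∫ x in P3 a b h, ((max (w' - cost fcor g x z) 0)^2/2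
          - (max (w - cost fcor g x z) 0)^2/2))
        - ∫ x in P3 a b h, (w - cost fcor g x z) * (w' - w) :=
    integral_sub (by exact iq'.sub iq) irr
  have e2 : (∫ x in P3 a b h, ((max (w' - cost fcor g x z) 0)^2/2
          - (max (w - cost fcor g x z) 0)^2/2))
      = (∫ x in P3 a b h, (max (w' - cost fcor g x z) 0)^2/2)
        - ∫ x in P3 a b h, (max (w - cost fcor g x z) 0)^2/2 :=
    integral_sub iq' iq
  have e3 : (∫ x in P3 a b h, (w - cost fcor g x z) * (w' - w)) = w' - w := by
    rw [integral_mul_const, hnorm, one_mul]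
  rw [e1, e2, e3] at hpos
  linarith

lemma cost_meas2 (fcor g : ℝ) : Measurable fun p : R3 × R3 => cost fcor g p.1 p.2 := by
  unfold cost
  have h1 : ∀ i : Fin 3, Measurable fun p : R3 × R3 => p.1 i :=
    fun i => ((contApp i).measurable).comp measurable_fst
  have h2 : ∀ i : Fin 3, Measurable fun p : R3 × R3 => p.2 i :=
    fun i => ((contApp i).measurable).comp measurable_snd
  exact ((h2 2).inv).mul ((((((h1 0).sub (h2 0)).pow_const 2).const_mul _).add
    ((((h1 1).sub (h2 1)).pow_const 2).const_mul _)).add ((h1 2).const_mul g))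

lemma Tcost_dirac (fcor g : ℝ) (z : R3) (σ : Measure R3) (hσ : IsProbabilityMeasure σ) :
    Tcost fcor g σ (Measure.dirac z) = ∫ x, cost fcor g x z ∂σ := by
  unfold Tcost
  have hset : {r : ℝ | ∃ pl : Measure (R3 × R3), IsProbabilityMeasure pl ∧
      pl.map Prod.fst = σ ∧ pl.map Prod.snd = Measure.dirac z ∧
      r = ∫ p, cost fcor g p.1 p.2 ∂pl} = {∫ x, cost fcor g x z ∂σ} := by
    ext r
    simp only [Set.mem_setOf_eq, Set.mem_singleton_iff]
    constructor
    · rintro ⟨pl, hpl, h1, h2, rfl⟩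
      have hae : ∀ᵐ p ∂pl, p.2 = z := by
        rw [MeasureTheory.ae_iff]
        have he : {p : R3 × R3 | ¬ p.2 = z} = Prod.snd ⁻¹' ({z}ᶜ) := rfl
        rw [he, ← Measure.map_apply measurable_snd (measurableSet_singleton z).compl, h2,
          Measure.dirac_apply' _ (measurableSet_singleton z).compl]
        simp
      have e1 : ∫ p, cost fcor g p.1 p.2 ∂pl = ∫ p, cost fcor g p.1 z ∂pl :=
        integral_congr_ae (hae.mono fun p hp => by simp only [hp])
      rw [e1, ← h1, integral_map measurable_fst.aemeasurable
        ((cost_cont fcor g z).aestronglyMeasurable)]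
    · rintro rfl
      refine ⟨σ.map (fun x => (x, z)), ?_, ?_, ?_, ?_⟩
      · exact Measure.isProbabilityMeasure_map (measurable_prodMk_right).aemeasurable
      · rw [Measure.map_map measurable_fst (measurable_prodMk_right)]
        exact Measure.map_id
      · rw [Measure.map_map measurable_snd (measurable_prodMk_right)]
        have : (Prod.snd ∘ fun x : R3 => (x, z)) = fun _ : R3 => z := rfl
        rw [this, Measure.map_const, measure_univ, one_smul]
      · exact (integral_map (measurable_prodMk_right).aemeasurable
          ((cost_meas2 fcor g).aestronglyMeasurable)).symm
  rw [hset, csInf_singleton]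

lemma mu_prob (fcor g a b h w : ℝ) (z : R3)
    (hrpos : ∀ x ∈ P3 a b h, 0 < w - cost fcor g x z)
    (hnorm : ∫ x in P3 a b h, (w - cost fcor g x z) = 1) :
    IsProbabilityMeasure ((volume.restrict (P3 a b h)).withDensity
      (fun x => ENNReal.ofReal (w - cost fcor g x z))) := by
  constructor
  rw [withDensity_apply _ MeasurableSet.univ, Measure.restrict_univ]
  have hint : IntegrableOn (fun x : R3 => w - cost fcor g x z) (P3 a b h) volume :=
    ((continuous_const.sub (cost_cont fcor g z)).continuousOn).integrableOn_compact
      (P3_compact a b h)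
  have hnn : 0 ≤ᶠ[ae (volume.restrict (P3 a b h))] fun x => w - cost fcor g x z := by
    rw [Filter.EventuallyLE, ae_restrict_iff' (P3_meas a b h)]
    exact Filter.Eventually.of_forall fun x hx => (hrpos x hx).le
  rw [← ofReal_integral_eq_lintegral_ofReal hint hnn, hnorm]
  simp

lemma ennreal_rpow_two (x : ℝ≥0∞) : x ^ (2:ℝ) = x ^ (2:ℕ) := by
  rw [show (2:ℝ) = ((2:ℕ):ℝ) by norm_num, ENNReal.rpow_natCast]

lemma Egeo_min (fcor g a b h w : ℝ) (z : R3)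
    (ha : 0 < a) (hb : 0 < b) (hh : 0 < h)
    (hrpos : ∀ x ∈ P3 a b h, 0 < w - cost fcor g x z)
    (hnorm : ∫ x in P3 a b h, (w - cost fcor g x z) = 1)
    (σ' : Measure R3) (hσp : IsProbabilityMeasure σ') (hσs : σ' (P3 a b h)ᶜ = 0) :
    Egeo fcor g (1/2) 2 (P3 a b h)
        ((volume.restrict (P3 a b h)).withDensity
          (fun x => ENNReal.ofReal (w - cost fcor g x z))) (Measure.dirac z)
      ≤ Egeo fcor g (1/2) 2 (P3 a b h) σ' (Measure.dirac z)
    ∧ (Egeo fcor g (1/2) 2 (P3 a b h) σ' (Measure.dirac z)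
        ≤ Egeo fcor g (1/2) 2 (P3 a b h)
          ((volume.restrict (P3 a b h)).withDensity
            (fun x => ENNReal.ofReal (w - cost fcor g x z))) (Measure.dirac z)
      → σ' = (volume.restrict (P3 a b h)).withDensity
          (fun x => ENNReal.ofReal (w - cost fcor g x z))) := by
  set X := P3 a b h with hXdef
  have hXm : MeasurableSet X := P3_meas a b h
  have hXc : IsCompact X := P3_compact a b h
  have hcc : Continuous fun x : R3 => cost fcor g x z := cost_cont fcor g z
  have hrcont : Continuous fun x : R3 => w - cost fcor g x z := continuous_const.sub hcc
  have hir : IntegrableOn (fun x : R3 => w - cost fcor g x z) X volume :=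
    hrcont.continuousOn.integrableOn_compact hXc
  have hir2 : IntegrableOn (fun x : R3 => (w - cost fcor g x z)^2) X volume :=
    (hrcont.pow 2).continuousOn.integrableOn_compact hXc
  have hicr : IntegrableOn (fun x : R3 => cost fcor g x z * (w - cost fcor g x z)) X volume :=
    (hcc.mul hrcont).continuousOn.integrableOn_compact hXc
  set μ := (volume.restrict X).withDensity
    (fun x => ENNReal.ofReal (w - cost fcor g x z)) with hμdef
  have hμprob : IsProbabilityMeasure μ := mu_prob fcor g a b h w z hrpos hnorm
  have hD : μ = volume.withDensity
      (X.indicator (fun x => ENNReal.ofReal (w - cost fcor g x z))) :=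
    (withDensity_indicator hXm _).symm
  have hDmeas : Measurable (X.indicator (fun x => ENNReal.ofReal (w - cost fcor g x z))) :=
    (ENNReal.measurable_ofReal.comp hrcont.measurable).indicator hXm
  have hμac : μ ≪ volume := by
    rw [hD]; exact withDensity_absolutelyContinuous _ _
  have hrn : μ.rnDeriv volume =ᵐ[volume]
      X.indicator (fun x => ENNReal.ofReal (w - cost fcor g x z)) := by
    rw [hD]; exact Measure.rnDeriv_withDensity volume hDmeas
  -- Fen μ
  have hFenμ : Fen (1/2) 2 X μ
      = (((1:ℝ)/2 * ∫ x in X, (w - cost fcor g x z)^2 : ℝ) : EReal) := by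
    unfold Fen
    rw [if_pos hμac]
    have l1 : ∫⁻ x in X, (μ.rnDeriv volume x) ^ (2:ℝ)
        = ∫⁻ x in X, ENNReal.ofReal ((w - cost fcor g x z)^2) := by
      apply lintegral_congr_ae
      filter_upwards [ae_restrict_of_ae hrn, ae_restrict_mem hXm] with x hx1 hx2
      rw [hx1, Set.indicator_of_mem hx2, ennreal_rpow_two,
        ← ENNReal.ofReal_pow (hrpos x hx2).le]
    rw [l1, ← ofReal_integral_eq_lintegral_ofReal hir2
      (Filter.Eventually.of_forall fun x => sq_nonneg _),
      ← ENNReal.ofReal_mul (by norm_num : (0:ℝ) ≤ 1/2), EReal.coe_ennreal_ofReal,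
      max_eq_left (by
        have h0 : 0 ≤ ∫ x in X, (w - cost fcor g x z)^2 :=
          setIntegral_nonneg (μ := volume) hXm (fun x _ => sq_nonneg _)
        linarith)]
  -- Tcost μ
  have hTμ : Tcost fcor g μ (Measure.dirac z)
      = ∫ x in X, cost fcor g x z * (w - cost fcor g x z) := by
    rw [Tcost_dirac fcor g z μ hμprob, hμdef]
    rw [show (fun x : R3 => ENNReal.ofReal (w - cost fcor g x z))
      = fun x => ((Real.toNNReal (w - cost fcor g x z) : ℝ≥0) : ℝ≥0∞) from rfl]
    rw [integral_withDensity_eq_integral_smul hrcont.measurable.real_toNNReal _]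
    apply integral_congr_ae
    filter_upwards [ae_restrict_mem hXm] with x hx
    rw [NNReal.smul_def, Real.coe_toNNReal _ (hrpos x hx).le, mul_comm, smul_eq_mul]
  have hEμ : Egeo fcor g (1/2) 2 X μ (Measure.dirac z)
      = (((∫ x in X, cost fcor g x z * (w - cost fcor g x z))
          + 1/2 * ∫ x in X, (w - cost fcor g x z)^2 : ℝ) : EReal) := by
    unfold Egeo
    rw [hTμ, hFenμ, ← EReal.coe_add]
  by_cases hac : σ' ≪ (volume : Measure R3)
  swap
  · have hFσ : Fen (1/2) 2 X σ' = ⊤ := by unfold Fen; rw [if_neg hac]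
    have hEσ : Egeo fcor g (1/2) 2 X σ' (Measure.dirac z) = ⊤ := by
      unfold Egeo
      rw [hFσ]
      exact EReal.add_top_of_ne_bot (EReal.coe_ne_bot _)
    constructor
    · rw [hEσ]; exact le_top
    · intro hle
      rw [hEσ, hEμ] at hle
      exact absurd hle (EReal.coe_lt_top _).not_ge
  -- absolutely continuous case
  set ρ := σ'.rnDeriv volume with hρdef
  have hρmeas : Measurable ρ := Measure.measurable_rnDeriv σ' volume
  have hσ'eq : σ' = volume.withDensity ρ := (Measure.withDensity_rnDeriv_eq σ' volume hac).symm
  have hρlt : ∀ᵐ x ∂(volume : Measure R3), ρ x < ⊤ := Measure.rnDeriv_lt_top σ' volume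
  have hXfull : σ' X = 1 := by
    have h1 := measure_add_measure_compl (μ := σ') hXm
    rw [hσs, add_zero, measure_univ] at h1
    exact h1
  have hlint1 : ∫⁻ x in X, ρ x = 1 := by
    rw [← withDensity_apply ρ hXm, ← hσ'eq]
    exact hXfull
  have hρzero : ρ =ᵐ[volume.restrict Xᶜ] 0 := by
    apply (lintegral_eq_zero_iff hρmeas).mp
    rw [← withDensity_apply ρ hXm.compl, ← hσ'eq]
    exact hσs
  by_cases hfin : ∫⁻ x in X, ρ x ^ (2:ℝ) = ⊤
  · have hFσ : Fen (1/2) 2 X σ' = ⊤ := by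
      unfold Fen
      rw [if_pos hac]
      rw [show ∫⁻ x in X, (σ'.rnDeriv volume x) ^ (2:ℝ) = ⊤ from hfin]
      rw [ENNReal.mul_top (by simp : ENNReal.ofReal (1/2) ≠ 0)]
      exact EReal.coe_ennreal_top
    have hEσ : Egeo fcor g (1/2) 2 X σ' (Measure.dirac z) = ⊤ := by
      unfold Egeo
      rw [hFσ]
      exact EReal.add_top_of_ne_bot (EReal.coe_ne_bot _)
    constructor
    · rw [hEσ]; exact le_top
    · intro hle
      rw [hEσ, hEμ] at hle
      exact absurd hle (EReal.coe_lt_top _).not_ge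
  -- finite energy case
  have hconv : ∫⁻ x in X, ρ x ^ (2:ℝ) = ∫⁻ x in X, ρ x ^ (2:ℕ) :=
    lintegral_congr fun x => ennreal_rpow_two (ρ x)
  set ρr := fun x => (ρ x).toReal with hρrdef
  have hiρ : IntegrableOn ρr X volume :=
    integrable_toReal_of_lintegral_ne_top hρmeas.aemeasurable.restrict
      (by rw [hlint1]; exact ENNReal.one_ne_top)
  have hiρ2 : IntegrableOn (fun x => ρr x ^ 2) X volume := by
    have h0 : Integrable (fun x => ((ρ x) ^ (2:ℕ)).toReal) (volume.restrict X) :=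
      integrable_toReal_of_lintegral_ne_top (hρmeas.pow_const 2).aemeasurable.restrict
        (by rw [← hconv]; exact hfin)
    have he : (fun x : R3 => ((ρ x) ^ (2:ℕ)).toReal) = fun x => ρr x ^ 2 :=
      funext fun x => ENNReal.toReal_pow _ _
    rwa [he] at h0
  have hρint1 : ∫ x in X, ρr x = 1 := by
    rw [hρrdef]
    rw [integral_toReal hρmeas.aemeasurable.restrict (ae_restrict_of_ae hρlt), hlint1]
    simp
  obtain ⟨M, hM⟩ := hXc.exists_bound_of_continuousOn hcc.continuousOn
  have hbound : ∀ᵐ x ∂(volume.restrict X), ‖cost fcor g x z‖ ≤ M := by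
    rw [ae_restrict_iff' hXm]
    exact Filter.Eventually.of_forall hM
  obtain ⟨Mr, hMr⟩ := hXc.exists_bound_of_continuousOn hrcont.continuousOn
  have hboundr : ∀ᵐ x ∂(volume.restrict X), ‖w - cost fcor g x z‖ ≤ Mr := by
    rw [ae_restrict_iff' hXm]
    exact Filter.Eventually.of_forall hMr
  have hicρ : IntegrableOn (fun x => cost fcor g x z * ρr x) X volume :=
    hiρ.bdd_mul hcc.aestronglyMeasurable.restrict hbound
  have hirρ : IntegrableOn (fun x => (w - cost fcor g x z) * ρr x) X volume :=
    hiρ.bdd_mul hrcont.aestronglyMeasurable.restrict hboundr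
  have hQint : IntegrableOn (fun x => (ρr x - (w - cost fcor g x z))^2) X volume := by
    have he : (fun x : R3 => (ρr x - (w - cost fcor g x z))^2)
        = fun x => ρr x^2 - (2:ℝ) * ((w - cost fcor g x z) * ρr x)
            + (w - cost fcor g x z)^2 := funext fun x => by ring
    rw [he]
    exact (hiρ2.sub (hirρ.const_mul 2)).add hir2
  -- Tcost σ'
  have hTσ : Tcost fcor g σ' (Measure.dirac z) = ∫ x in X, cost fcor g x z * ρr x := by
    rw [Tcost_dirac fcor g z σ' hσp]
    have e0 : ∫ x, cost fcor g x z ∂σ'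
        = ∫ x, cost fcor g x z ∂(volume.withDensity
            (fun x => (((ρ x).toNNReal : ℝ≥0) : ℝ≥0∞))) := by
      rw [← withDensity_congr_ae (hρlt.mono fun x hx => (ENNReal.coe_toNNReal hx.ne).symm),
        ← hσ'eq]
    rw [e0, integral_withDensity_eq_integral_smul hρmeas.ennreal_toNNReal _]
    have e1 : ∫ x, (ρ x).toNNReal • cost fcor g x z
        = ∫ x in X, (ρ x).toNNReal • cost fcor g x z := by
      refine (setIntegral_eq_integral_of_ae_compl_eq_zero ?_).symm
      filter_upwards [(ae_restrict_iff' hXm.compl).mp hρzero] with x hx hxc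
      rw [hx hxc]
      simp
    rw [e1]
    apply integral_congr_ae
    refine Filter.Eventually.of_forall fun x => ?_
    exact ((NNReal.smul_def _ _).trans (mul_comm _ _))
  -- Fen σ'
  have hFσ : Fen (1/2) 2 X σ' = (((1:ℝ)/2 * ∫ x in X, ρr x^2 : ℝ) : EReal) := by
    unfold Fen
    rw [if_pos hac]
    have l1 : ∫⁻ x in X, (σ'.rnDeriv volume x) ^ (2:ℝ)
        = ∫⁻ x in X, ENNReal.ofReal (ρr x^2) := by
      apply lintegral_congr_ae
      filter_upwards [ae_restrict_of_ae hρlt] with x hx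
      have hxx : σ'.rnDeriv volume x = ρ x := rfl
      rw [hxx, ennreal_rpow_two, ENNReal.ofReal_pow ENNReal.toReal_nonneg,
        show ENNReal.ofReal (ρr x) = ρ x from ENNReal.ofReal_toReal hx.ne]
    rw [l1, ← ofReal_integral_eq_lintegral_ofReal hiρ2
      (Filter.Eventually.of_forall fun x => sq_nonneg _),
      ← ENNReal.ofReal_mul (by norm_num : (0:ℝ) ≤ 1/2), EReal.coe_ennreal_ofReal,
      max_eq_left (by
        have h0 : 0 ≤ ∫ x in X, ρr x^2 :=
          setIntegral_nonneg (μ := volume) hXm (fun x _ => sq_nonneg _)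
        linarith)]
  have hEσ : Egeo fcor g (1/2) 2 X σ' (Measure.dirac z)
      = (((∫ x in X, cost fcor g x z * ρr x) + 1/2 * ∫ x in X, ρr x^2 : ℝ) : EReal) := by
    unfold Egeo
    rw [hTσ, hFσ, ← EReal.coe_add]
  -- key real identity
  have ptw : Set.EqOn
      (fun x => cost fcor g x z * ρr x + 1/2 * ρr x^2
        - (cost fcor g x z * (w - cost fcor g x z) + 1/2 * (w - cost fcor g x z)^2)
        - 1/2 * (ρr x - (w - cost fcor g x z))^2)
      (fun x => w * (ρr x - (w - cost fcor g x z))) X := fun x _ => by ring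
  have s1 := setIntegral_congr_fun (μ := volume) hXm ptw
  have s2 : ∫ x in X, w * (ρr x - (w - cost fcor g x z)) = 0 := by
    rw [integral_const_mul, integral_sub hiρ hir, hρint1, hnorm]
    ring
  have iAB : IntegrableOn (fun x => cost fcor g x z * ρr x + 1/2 * ρr x^2) X volume :=
    hicρ.add (hiρ2.const_mul (1/2))
  have iCD : IntegrableOn (fun x => cost fcor g x z * (w - cost fcor g x z)
      + 1/2 * (w - cost fcor g x z)^2) X volume :=
    hicr.add (hir2.const_mul (1/2))
  have iE : IntegrableOn (fun x => (1:ℝ)/2 * (ρr x - (w - cost fcor g x z))^2) X volume :=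
    hQint.const_mul (1/2)
  have u1 : (∫ x in X, (cost fcor g x z * ρr x + 1/2 * ρr x^2
        - (cost fcor g x z * (w - cost fcor g x z) + 1/2 * (w - cost fcor g x z)^2)
        - 1/2 * (ρr x - (w - cost fcor g x z))^2))
      = (∫ x in X, (cost fcor g x z * ρr x + 1/2 * ρr x^2
          - (cost fcor g x z * (w - cost fcor g x z) + 1/2 * (w - cost fcor g x z)^2)))
        - ∫ x in X, 1/2 * (ρr x - (w - cost fcor g x z))^2 :=
    integral_sub (by exact iAB.sub iCD) iE
  have u2 : (∫ x in X, (cost fcor g x z * ρr x + 1/2 * ρr x^2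
          - (cost fcor g x z * (w - cost fcor g x z) + 1/2 * (w - cost fcor g x z)^2)))
      = (∫ x in X, (cost fcor g x z * ρr x + 1/2 * ρr x^2))
        - ∫ x in X, (cost fcor g x z * (w - cost fcor g x z)
            + 1/2 * (w - cost fcor g x z)^2) :=
    integral_sub iAB iCD
  have u3 : (∫ x in X, (cost fcor g x z * ρr x + 1/2 * ρr x^2))
      = (∫ x in X, cost fcor g x z * ρr x) + 1/2 * ∫ x in X, ρr x^2 := by
    rw [integral_add hicρ (hiρ2.const_mul (1/2)), integral_const_mul]
  have u4 : (∫ x in X, (cost fcor g x z * (w - cost fcor g x z)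
        + 1/2 * (w - cost fcor g x z)^2))
      = (∫ x in X, cost fcor g x z * (w - cost fcor g x z))
        + 1/2 * ∫ x in X, (w - cost fcor g x z)^2 := by
    rw [integral_add hicr (hir2.const_mul (1/2)), integral_const_mul]
  have u5 : (∫ x in X, 1/2 * (ρr x - (w - cost fcor g x z))^2)
      = 1/2 * ∫ x in X, (ρr x - (w - cost fcor g x z))^2 := integral_const_mul _ _
  have hQnn : 0 ≤ ∫ x in X, (ρr x - (w - cost fcor g x z))^2 :=
    setIntegral_nonneg hXm fun x _ => sq_nonneg _
  have key : ((∫ x in X, cost fcor g x z * ρr x) + 1/2 * ∫ x in X, ρr x^2)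
      - ((∫ x in X, cost fcor g x z * (w - cost fcor g x z))
        + 1/2 * ∫ x in X, (w - cost fcor g x z)^2)
      = 1/2 * ∫ x in X, (ρr x - (w - cost fcor g x z))^2 := by
    have := s1
    rw [u1, u2, u3, u4, u5, s2] at this
    linarith
  constructor
  · rw [hEμ, hEσ, EReal.coe_le_coe_iff]
    linarith
  · intro hle
    rw [hEμ, hEσ, EReal.coe_le_coe_iff] at hle
    have hQ0 : ∫ x in X, (ρr x - (w - cost fcor g x z))^2 = 0 :=
      le_antisymm (by linarith) hQnn
    have haeq : (fun x => (ρr x - (w - cost fcor g x z))^2) =ᵐ[volume.restrict X] 0 :=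
      (integral_eq_zero_iff_of_nonneg_ae
        (Filter.Eventually.of_forall fun x => sq_nonneg _) hQint).mp hQ0
    have haeq2 : ∀ᵐ x ∂(volume.restrict X), ρr x = w - cost fcor g x z := by
      filter_upwards [haeq] with x hx
      simp only [Pi.zero_apply] at hx
      have h2 := (pow_eq_zero_iff (two_ne_zero)).mp hx
      linarith
    rw [hσ'eq, hD]
    apply withDensity_congr_ae
    apply ae_of_ae_restrict_of_ae_restrict_compl X
    · filter_upwards [ae_restrict_mem hXm, ae_restrict_of_ae hρlt, haeq2] with x hx hlt heq
      rw [Set.indicator_of_mem hx, ← heq]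
      exact (ENNReal.ofReal_toReal hlt.ne).symm
    · filter_upwards [ae_restrict_mem hXm.compl, hρzero] with x hx h0
      rw [Set.indicator_of_notMem hx]
      simpa using h0
theorem stmt18 (fcor g δ : ℝ) (hf : 0 < fcor) (hg : 0 < g) (hδ : δ ∈ Set.Ioo (0:ℝ) 1)
    (a b h : ℝ) (ha : 0 < a) (hb : 0 < b) (hh : 0 < h)
    (Xbox : Set R3)
    (hXbox : Xbox = {x : R3 | x 0 ∈ Set.Icc (-a) a ∧ x 1 ∈ Set.Icc (-b) b ∧
      x 2 ∈ Set.Icc (0:ℝ) h})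
    (z : R3) (hz : z ∈ Ydom δ)
    (hsmall : ∀ x ∈ Xbox,
      cost fcor g x z - (4*a*b*h)⁻¹ * ∫ x' in Xbox, cost fcor g x' z < (4*a*b*h)⁻¹)
    (w : ℝ) (hw : w = (4*a*b*h)⁻¹ * (1 + ∫ x in Xbox, cost fcor g x z))
    (A B : ℝ) (hA : A = 1 - (4*a*b*h) * fcor ^ 2 * b ^ 2 / (3 * z 2))
    (hB : B = 1 - (4*a*b*h) * fcor ^ 2 * a ^ 2 / (3 * z 2)) :
    ((∀ w' : ℝ, w' - (∫ x in Xbox, fstar (1/2) 2 (w' - cost fcor g x z))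
        ≤ w - ∫ x in Xbox, fstar (1/2) 2 (w - cost fcor g x z)) ∧
      (∀ w' : ℝ, (∀ w'' : ℝ, w'' - (∫ x in Xbox, fstar (1/2) 2 (w'' - cost fcor g x z))
        ≤ w' - ∫ x in Xbox, fstar (1/2) 2 (w' - cost fcor g x z)) → w' = w)) ∧
    (∃ μ : Measure R3,
      μ = (volume.restrict Xbox).withDensity (fun x => ENNReal.ofReal (w - cost fcor g x z)) ∧
      IsProbabilityMeasure μ ∧
      (∀ σ' : Measure R3, IsProbabilityMeasure σ' → σ' Xboxᶜ = 0 →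
        Egeo fcor g (1/2) 2 Xbox μ (Measure.dirac z)
          ≤ Egeo fcor g (1/2) 2 Xbox σ' (Measure.dirac z)) ∧
      (∀ σ' : Measure R3, IsProbabilityMeasure σ' → σ' Xboxᶜ = 0 →
        (∀ σ'' : Measure R3, IsProbabilityMeasure σ'' → σ'' Xboxᶜ = 0 →
          Egeo fcor g (1/2) 2 Xbox σ' (Measure.dirac z)
            ≤ Egeo fcor g (1/2) 2 Xbox σ'' (Measure.dirac z)) → σ' = μ)) ∧
    ((∫ x in Xbox, (w - cost fcor g x z) • x) 0 = (1 - B) * z 0 ∧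
     (∫ x in Xbox, (w - cost fcor g x z) • x) 1 = (1 - A) * z 1) := by
  have hXP : Xbox = P3 a b h := by rw [hXbox, Xbox_eq a b h]; rfl
  have hz2 : 0 < z 2 := lt_trans hδ.1 hz.1
  have hz2' : z 2 ≠ 0 := ne_of_gt hz2
  have h4 : (4*a*b*h) ≠ 0 := by positivity
  rw [hXP] at hsmall hw ⊢
  have hXm : MeasurableSet (P3 a b h) := P3_meas a b h
  have hXc : IsCompact (P3 a b h) := P3_compact a b h
  have hcc : Continuous fun x : R3 => cost fcor g x z := cost_cont fcor g z
  have hrcont : Continuous fun x : R3 => w - cost fcor g x z := continuous_const.sub hcc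
  have hIc : IntegrableOn (fun x : R3 => cost fcor g x z) (P3 a b h) volume :=
    hcc.continuousOn.integrableOn_compact hXc
  have hiconst : IntegrableOn (fun _ : R3 => w) (P3 a b h) volume :=
    continuous_const.continuousOn.integrableOn_compact hXc
  have hnorm : ∫ x in P3 a b h, (w - cost fcor g x z) = 1 := by
    rw [integral_sub hiconst hIc, setIntegral_const, show volume.real (P3 a b h) = 4*a*b*h from P3_volume a b h ha hb hh, smul_eq_mul,
      hw]
    field_simp
    ring
  have hrpos : ∀ x ∈ P3 a b h, 0 < w - cost fcor g x z := by
    intro x hx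
    have hs := hsmall x hx
    rw [hw, mul_add, mul_one]
    linarith
  refine ⟨⟨?_, ?_⟩, ?_, ?_, ?_⟩
  · -- maximality
    intro w'
    simp only [fstar_eq]
    by_cases hne : w' = w
    · rw [hne]
    · exact (Gstrict fcor g a b h w z ha hb hh hrpos hnorm w' hne).le
  · -- uniqueness of maximiser
    intro w' hopt
    by_contra hne
    have h1 := hopt w
    simp only [fstar_eq] at h1
    have h2 := Gstrict fcor g a b h w z ha hb hh hrpos hnorm w' hne
    linarith
  · -- existence of minimiser
    refine ⟨_, rfl, mu_prob fcor g a b h w z hrpos hnorm, ?_, ?_⟩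
    · intro σ' hp hs
      exact (Egeo_min fcor g a b h w z ha hb hh hrpos hnorm σ' hp hs).1
    · intro σ' hp hs hopt
      refine (Egeo_min fcor g a b h w z ha hb hh hrpos hnorm σ' hp hs).2 ?_
      have hμcompl : ((volume.restrict (P3 a b h)).withDensity
          (fun x => ENNReal.ofReal (w - cost fcor g x z))) (P3 a b h)ᶜ = 0 := by
        rw [withDensity_apply _ hXm.compl, Measure.restrict_restrict hXm.compl,
          compl_inter_self, Measure.restrict_empty, lintegral_zero_measure]
      exact hopt _ (mu_prob fcor g a b h w z hrpos hnorm) hμcompl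
  · -- centroid component 0
    have hint : IntegrableOn (fun x : R3 => (w - cost fcor g x z) • x) (P3 a b h) volume :=
      (hrcont.smul continuous_id).continuousOn.integrableOn_compact hXc
    have e1 : (∫ x in P3 a b h, (w - cost fcor g x z) • x) 0
        = ∫ x in P3 a b h, (w - cost fcor g x z) * x 0 :=
      (ContinuousLinearMap.integral_comp_comm (EuclideanSpace.proj (0:Fin 3)) hint).symm
    rw [e1, P3_centroid0 fcor g a b h w z ha hb hh, hB]
    field_simp
    ring
  · -- centroid component 1
    have hint : IntegrableOn (fun x : R3 => (w - cost fcor g x z) • x) (P3 a b h) volume :=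
      (hrcont.smul continuous_id).continuousOn.integrableOn_compact hXc
    have e1 : (∫ x in P3 a b h, (w - cost fcor g x z) • x) 1
        = ∫ x in P3 a b h, (w - cost fcor g x z) * x 1 :=
      (ContinuousLinearMap.integral_comp_comm (EuclideanSpace.proj (1:Fin 3)) hint).symm
    rw [e1, P3_centroid1 fcor g a b h w z ha hb hh, hA]
    field_simp
    ring
end
end

section
/- Define ŷ : Y^N → (ℝ³)^N by ŷ^i(z) = (1/(2 z₃^i)) (z₁^i, z₂^i, −1), and ψ̂ : ℝ^N × Y^N → ℝ^N by ψ̂^i(w,z) = w^i + (z₁^i/(2 z₃^i))² + (z₂^i/(2 z₃^i))² + (1/(2 z₃^i))² − (f_cor²/(2 z₃^i))((z₁^i)² + (z₂^i)²). Then for every i ∈ {1,…,N} and every (w,z) ∈ ℝ^N × D^N, the image of the c-Laguerre cell under Φ⁻¹ is a classical Laguerre cell: Φ⁻¹(L^i_c(w,z)) = {x ∈ Φ⁻¹(X) : ‖x − ŷ^i(z)‖² − ψ̂^i(w,z) ≤ ‖x − ŷ^j(z)‖² − ψ̂^j(w,z) for all j ∈ {1,…,N}}. -/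
open MeasureTheory Set Real Filter
open scoped ENNReal NNReal

noncomputable section

/-- seeds of the classical Laguerre tessellation -/
def yhat (zi : R3) : R3 := (2 * zi 2)⁻¹ • (WithLp.toLp 2 ![zi 0, zi 1, -1] : R3)

/-- weights of the classical Laguerre tessellation -/
def psihat (fcor : ℝ) (wi : ℝ) (zi : R3) : ℝ :=
  wi + (zi 0 / (2 * zi 2)) ^ 2 + (zi 1 / (2 * zi 2)) ^ 2 + (1 / (2 * zi 2)) ^ 2
    - fcor ^ 2 / (2 * zi 2) * ((zi 0) ^ 2 + (zi 1) ^ 2)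

lemma norm_sq_three (v : R3) : ‖v‖ ^ 2 = v 0 ^ 2 + v 1 ^ 2 + v 2 ^ 2 := by
  rw [EuclideanSpace.norm_eq]
  rw [Real.sq_sqrt (by positivity)]
  simp [Fin.sum_univ_three, sq_abs]

lemma key_identity (fcor g : ℝ) (hf : fcor ≠ 0) (hg : g ≠ 0) (zj : R3) (hz2 : zj 2 ≠ 0)
    (wj : ℝ) (x : R3) :
    cost fcor g (Phi fcor g x) zj - wj
      = ‖x - yhat zj‖ ^ 2 - psihat fcor wj zj - ‖x‖ ^ 2 := by
  have h0 : ∀ k : Fin 3, (x - yhat zj) k = x k - yhat zj k := fun k => rfl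
  rw [norm_sq_three (x - yhat zj), norm_sq_three x]
  simp only [h0]
  simp only [cost, Phi, yhat, psihat, PiLp.smul_apply, smul_eq_mul]
  simp only [Matrix.cons_val_zero, Matrix.cons_val_one, Matrix.head_cons,
    Matrix.cons_val_two, Matrix.tail_cons]
  have h2 : (2 : ℝ) * zj 2 ≠ 0 := by
    intro h; apply hz2; linarith [h]
  field_simp
  ring

theorem stmt19 (fcor g δ : ℝ) (hf : 0 < fcor) (hg : 0 < g) (hδ : δ ∈ Set.Ioo (0:ℝ) 1)
    (X : Set R3) (hXne : X.Nonempty) (hXconn : IsConnected X) (hXcpt : IsCompact X)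
    (hXcl : X = closure (interior X))
    (N : ℕ) (w : Fin N → ℝ) (z : Fin N → R3) (hz : z ∈ DN δ N) (i : Fin N) :
    Phi fcor g ⁻¹' (LagCell fcor g X N w z i)
      = {x ∈ Phi fcor g ⁻¹' X | ∀ j : Fin N,
          ‖x - yhat (z i)‖ ^ 2 - psihat fcor (w i) (z i)
            ≤ ‖x - yhat (z j)‖ ^ 2 - psihat fcor (w j) (z j)} := by
  ext x
  simp only [Set.mem_preimage, LagCell, Set.mem_setOf_eq, Set.mem_sep_iff]
  have hf' : fcor ≠ 0 := ne_of_gt hf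
  have hg' : g ≠ 0 := ne_of_gt hg
  have hz2 : ∀ j : Fin N, z j 2 ≠ 0 := fun j =>
    ne_of_gt (lt_trans hδ.1 (hz.1 j).1)
  constructor
  · rintro ⟨hX, hle⟩
    refine ⟨hX, fun j => ?_⟩
    have := hle j
    rw [key_identity fcor g hf' hg' (z i) (hz2 i) (w i) x,
      key_identity fcor g hf' hg' (z j) (hz2 j) (w j) x] at this
    linarith
  · rintro ⟨hX, hle⟩
    refine ⟨hX, fun j => ?_⟩
    have := hle j
    rw [key_identity fcor g hf' hg' (z i) (hz2 i) (w i) x,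
      key_identity fcor g hf' hg' (z j) (hz2 j) (w j) x]
    linarith
end
end
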